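/- Let q = 2^m. For every a ∈ F_{q^3}, the cubic equation x³ + x(y² + z² + yz)·Tr(α^{q+1}) + Tr((yα + zα^q)³) = 0 (in the variable x), where y, z ∈ F_q and α is as above, factors as (x + yα + zα^q)(x + yα^q + zα^{q²})(x + yα^{q²} + zα) = 0; hence if (y, z) ≠ (0, 0) it has no solution x ∈ F_q. -/

import Mathlib

theorem stmt_8 (m : ℕ) (hm : 0 < m) (q : ℕ) (hq : q = 2 ^ m)
    (F E : Type*) [Field F] [Fintype F] [Field E] [Fintype E] [Algebra F E]
    (hF : Fintype.card F = q) (hE : Fintype.card E = q ^ 3)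
    (Tr : E → E) (hTr : ∀ X, Tr X = X + X ^ q + X ^ q ^ 2)
    (α : E) (hα0 : α ≠ 0) (hαtr : Tr α = 0)
    (hb : ∃ b : Module.Basis (Fin 3) F E, b 0 = 1 ∧ b 1 = α ∧ b 2 = α ^ q) :
    (∀ (X : E) (y z : F),
        (X + algebraMap F E y * α + algebraMap F E z * α ^ q) *
            (X + algebraMap F E y * α ^ q + algebraMap F E z * α ^ q ^ 2) *
            (X + algebraMap F E y * α ^ q ^ 2 + algebraMap F E z * α) =
          X ^ 3 + X * (algebraMap F E (y ^ 2 + z ^ 2 + y * z) * Tr (α ^ (q + 1))) +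
            Tr ((algebraMap F E y * α + algebraMap F E z * α ^ q) ^ 3)) ∧
      ∀ y z : F, ¬(y = 0 ∧ z = 0) → ∀ x : F,
        (algebraMap F E x) ^ 3 +
            algebraMap F E x * (algebraMap F E (y ^ 2 + z ^ 2 + y * z) * Tr (α ^ (q + 1))) +
            Tr ((algebraMap F E y * α + algebraMap F E z * α ^ q) ^ 3) ≠ 0 := by
  -- characteristic 2
  haveI hcr := ringChar.charP E
  have hprime : (ringChar E).Prime := CharP.char_is_prime E (ringChar E)
  have hdvd : ringChar E ∣ q ^ 3 := by
    rw [← CharP.cast_eq_zero_iff E (ringChar E), ← hE]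
    exact FiniteField.cast_card_eq_zero E
  have hchar : ringChar E = 2 := by
    rw [hq, ← pow_mul] at hdvd
    exact (Nat.prime_dvd_prime_iff_eq hprime Nat.prime_two).1
      (hprime.dvd_of_dvd_pow hdvd)
  haveI : CharP E 2 := hchar ▸ hcr
  haveI : Fact (Nat.Prime 2) := ⟨Nat.prime_two⟩
  have h2E : (2 : E) = 0 := by exact_mod_cast CharP.cast_eq_zero E 2
  -- Frobenius facts
  have hfrob : ∀ u v : E, (u + v) ^ q = u ^ q + v ^ q := by
    intro u v; rw [hq]; exact add_pow_char_pow u v 2 m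
  have hmapF : ∀ y : F, (algebraMap F E y) ^ q = algebraMap F E y := by
    intro y; rw [← map_pow, ← hF, FiniteField.pow_card]
  have hq2 : ∀ x : E, x ^ q ^ 2 = (x ^ q) ^ q := by
    intro x; rw [← pow_mul, pow_two]
  have hC : α ^ q ^ 2 = α + α ^ q := by
    have h := hαtr; rw [hTr] at h
    linear_combination h - (α + α ^ q) * h2E
  have hBq : (α ^ q) ^ q = α + α ^ q := by rw [← hq2]; exact hC
  have hA3 : (α + α ^ q) ^ q = α := by
    rw [← hBq, ← pow_mul, ← pow_mul]
    have h3 : q * (q * q) = q ^ 3 := by ring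
    rw [h3, ← hE]; exact FiniteField.pow_card α
  obtain ⟨b, hb0, hb1, hb2⟩ := hb
  have hind : ∀ c0 c1 c2 : F,
      algebraMap F E c0 + algebraMap F E c1 * α + algebraMap F E c2 * α ^ q = 0 →
      c0 = 0 ∧ c1 = 0 ∧ c2 = 0 := by
    intro c0 c1 c2 h
    have hli := b.linearIndependent
    rw [Fintype.linearIndependent_iff] at hli
    have hz : ∑ i : Fin 3, (![c0, c1, c2] i) • b i = 0 := by
      rw [Fin.sum_univ_three, hb0, hb1, hb2]
      simp only [Matrix.cons_val_zero, Matrix.cons_val_one, Matrix.head_cons, Matrix.cons_val_two, Matrix.tail_cons,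
        Algebra.smul_def, mul_one]
      convert h using 2
    have := hli ![c0, c1, c2] hz
    exact ⟨this 0, this 1, this 2⟩
  -- the factorization
  have hfact : ∀ (X : E) (y z : F),
      (X + algebraMap F E y * α + algebraMap F E z * α ^ q) *
          (X + algebraMap F E y * α ^ q + algebraMap F E z * α ^ q ^ 2) *
          (X + algebraMap F E y * α ^ q ^ 2 + algebraMap F E z * α) =
        X ^ 3 + X * (algebraMap F E (y ^ 2 + z ^ 2 + y * z) * Tr (α ^ (q + 1))) +
          Tr ((algebraMap F E y * α + algebraMap F E z * α ^ q) ^ 3) := by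
    intro X y z
    have hβq : (algebraMap F E y * α + algebraMap F E z * α ^ q) ^ q
        = algebraMap F E y * α ^ q + algebraMap F E z * (α + α ^ q) := by
      rw [hfrob, mul_pow, mul_pow, hmapF, hmapF, hBq]
    have hβq2 : (algebraMap F E y * α ^ q + algebraMap F E z * (α + α ^ q)) ^ q
        = algebraMap F E y * (α + α ^ q) + algebraMap F E z * α := by
      rw [hfrob, mul_pow, mul_pow, hmapF, hmapF, hBq, hA3]
    have hcube : ∀ u : E, (u ^ 3) ^ q = (u ^ q) ^ 3 := by
      intro u; rw [← pow_mul, mul_comm, pow_mul]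
    have hT1 : Tr (α ^ (q + 1)) = α * α ^ q + α ^ q * (α + α ^ q) + (α + α ^ q) * α := by
      rw [hTr, hq2, pow_succ']
      simp only [mul_pow, hBq, hA3]
    have hT2 : Tr ((algebraMap F E y * α + algebraMap F E z * α ^ q) ^ 3) =
        (algebraMap F E y * α + algebraMap F E z * α ^ q) ^ 3 +
        (algebraMap F E y * α ^ q + algebraMap F E z * (α + α ^ q)) ^ 3 +
        (algebraMap F E y * (α + α ^ q) + algebraMap F E z * α) ^ 3 := by
      have hcube : ∀ u : E, (u ^ 3) ^ q = (u ^ q) ^ 3 := by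
        intro u; rw [← pow_mul, mul_comm, pow_mul]
      rw [hTr, hq2, hcube, hcube, hβq, hβq2]
    rw [hT1, hT2, hC, map_add, map_add, map_pow, map_pow, map_mul]
    linear_combination (-((algebraMap F E z)^3*(α ^ q)^3) - (algebraMap F E z)^3*α*(α ^ q)^2 - (algebraMap F E z)^3*α^2*(α ^ q) - (algebraMap F E z)^3*α^3 - (algebraMap F E y)*(algebraMap F E z)^2*(α ^ q)^3 - 3*(algebraMap F E y)*(algebraMap F E z)^2*α*(α ^ q)^2 - 2*(algebraMap F E y)*(algebraMap F E z)^2*α^2*(α ^ q) - (algebraMap F E y)*(algebraMap F E z)^2*α^3 - (algebraMap F E y)^2*(algebraMap F E z)*(α ^ q)^3 - 2*(algebraMap F E y)^2*(algebraMap F E z)*α*(α ^ q)^2 - 3*(algebraMap F E y)^2*(algebraMap F E z)*α^2*(α ^ q) - (algebraMap F E y)^2*(algebraMap F E z)*α^3 - (algebraMap F E y)^3*(α ^ q)^3 - (algebraMap F E y)^3*α*(α ^ q)^2 - (algebraMap F E y)^3*α^2*(α ^ q) - (algebraMap F E y)^3*α^3 + X*(algebraMap F E y)*(algebraMap F E z)*(α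 ^ q)^2 + X*(algebraMap F E y)*(algebraMap F E z)*α*(α ^ q) + X*(algebraMap F E y)*(algebraMap F E z)*α^2 + X^2*(algebraMap F E z)*(α ^ q) + X^2*(algebraMap F E z)*α + X^2*(algebraMap F E y)*(α ^ q) + X^2*(algebraMap F E y)*α) * h2E
  refine ⟨hfact, ?_⟩
  intro y z hyz x hx
  rw [← hfact (algebraMap F E x) y z] at hx
  rcases mul_eq_zero.1 hx with h12 | h3
  · rcases mul_eq_zero.1 h12 with h1 | h2
    · obtain ⟨-, hy, hz⟩ := hind x y z h1
      exact hyz ⟨hy, hz⟩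
    · have h2' : algebraMap F E x + algebraMap F E z * α + algebraMap F E (y + z) * α ^ q = 0 := by
        rw [map_add]; rw [hC] at h2; ring_nf; ring_nf at h2; linear_combination h2
      obtain ⟨-, hz, hyz'⟩ := hind x z (y + z) h2'
      refine hyz ⟨?_, hz⟩
      have := hyz'; rwa [hz, add_zero] at this
  · have h3' : algebraMap F E x + algebraMap F E (y + z) * α + algebraMap F E y * α ^ q = 0 := by
      rw [map_add]; rw [hC] at h3; linear_combination h3
    obtain ⟨-, hyz', hy⟩ := hind x (y + z) y h3'
    refine hyz ⟨hy, ?_⟩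
    have := hyz'; rwa [hy, zero_add] at this
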